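/- Let T : X → X be firmly nonexpansive with no fixed point. Then (ran T)^∞ ∩ (ran(T − Id))^∞ = rec(closure(ran T)) ∩ rec(closure(ran(T − Id))), i.e. the intersection of the horizon cones of the ranges of T and of T − Id equals the intersection of the recession cones of the closures of these ranges. -/

import Mathlib

open Filter Topology

variable {X : Type*} [NormedAddCommGroup X] [InnerProductSpace ℝ X] [FiniteDimensional ℝ X]

/-- The horizon cone `S^∞` of a set `S`: all limits `λ_n • s_n → x` with `s_n ∈ S`,
`λ_n > 0` and `λ_n → 0`. -/
def horizonCone (S : Set X) : Set X :=
  {x : X | ∃ (s : ℕ → X) (l : ℕ → ℝ), (∀ n, s n ∈ S) ∧ (∀ n, 0 < l n) ∧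
    Tendsto l atTop (nhds 0) ∧ Tendsto (fun n => l n • s n) atTop (nhds x)}

/-- The recession cone `rec S = {x : x + S ⊆ S}` of a set `S`. -/
def recCone (S : Set X) : Set X := {x : X | ∀ s ∈ S, x + s ∈ S}

set_option linter.unusedSectionVars false
set_option maxHeartbeats 1000000

/-- An algebraic identity for inner products and convex combinations. -/
lemma aux_combo_ident (u₁ u₂ p : X) (t : ℝ) :
    ‖p - ((1 - t) • u₁ + t • u₂)‖ ^ 2
      = (1 - t) * ‖p - u₁‖ ^ 2 + t * ‖p - u₂‖ ^ 2
        - ((1 - t) * (inner ℝ ((1 - t) • u₁ + t • u₂ - u₁) (p - u₁) : ℝ)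
          + t * (inner ℝ ((1 - t) • u₁ + t • u₂ - u₂) (p - u₂) : ℝ)) := by
  simp only [norm_sub_sq_real, inner_add_right, inner_add_left, inner_sub_left, inner_sub_right,
    real_inner_smul_left, real_inner_smul_right, real_inner_self_eq_norm_sq,
    norm_add_sq_real, norm_smul, Real.norm_eq_abs]
  rw [real_inner_comm u₂ u₁, real_inner_comm p u₁, real_inner_comm p u₂]
  ring_nf
  nlinarith [sq_abs (1 - t), sq_abs t, sq_nonneg t]

/-- For a firmly nonexpansive `U` and `0 < l ≤ 1`, the map `l • Id + (1 - l) • U`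
is surjective (by the Banach contraction principle). -/
lemma aux_fne_surj {U : X → X}
    (hU : ∀ x y : X, ‖U x - U y‖ ^ 2 ≤ (inner ℝ (x - y) (U x - U y) : ℝ))
    {l : ℝ} (hl0 : 0 < l) (hl1 : l ≤ 1) (z : X) :
    ∃ x : X, l • x + (1 - l) • U x = z := by
  have hnexp : ∀ x y : X, ‖U x - U y‖ ≤ ‖x - y‖ := by
    intro x y
    have h := hU x y
    have hcs : (inner ℝ (x - y) (U x - U y) : ℝ) ≤ ‖x - y‖ * ‖U x - U y‖ := real_inner_le_norm _ _
    rcases eq_or_lt_of_le (norm_nonneg (U x - U y)) with h0 | h0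
    · rw [← h0]; exact norm_nonneg _
    · nlinarith
  set f : X → X := fun x => l • x + (1 - l) • U x with hf
  set g : X → X := fun x => x - l • (f x - z) with hg
  have hsq : ∀ x y : X, ‖g x - g y‖ ^ 2 ≤ (1 - l ^ 2) * ‖x - y‖ ^ 2 := by
    intro x y
    have hgd : g x - g y = (x - y) - l • (f x - f y) := by
      show (x - l • (f x - z)) - (y - l • (f y - z)) = (x - y) - l • (f x - f y)
      rw [smul_sub, smul_sub, smul_sub]; abel
    have hfd : f x - f y = l • (x - y) + (1 - l) • (U x - U y) := by
      show (l • x + (1 - l) • U x) - (l • y + (1 - l) • U y) = _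
      rw [smul_sub, smul_sub]; abel
    have hhh : (inner ℝ (x - y) (f x - f y) : ℝ) ≥ l * ‖x - y‖ ^ 2 := by
      rw [hfd, inner_add_right, real_inner_smul_right, real_inner_smul_right,
        real_inner_self_eq_norm_sq]
      have h1 : (0:ℝ) ≤ inner ℝ (x - y) (U x - U y) := le_trans (by positivity) (hU x y)
      nlinarith
    have hfn : ‖f x - f y‖ ≤ ‖x - y‖ := by
      rw [hfd]
      calc ‖l • (x - y) + (1 - l) • (U x - U y)‖
          ≤ ‖l • (x - y)‖ + ‖(1 - l) • (U x - U y)‖ := norm_add_le _ _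
        _ = l * ‖x - y‖ + (1 - l) * ‖U x - U y‖ := by
            rw [norm_smul, norm_smul, Real.norm_eq_abs, Real.norm_eq_abs,
              abs_of_pos hl0, abs_of_nonneg (by linarith)]
        _ ≤ ‖x - y‖ := by nlinarith [hnexp x y, norm_nonneg (U x - U y)]
    have hexp : ‖g x - g y‖ ^ 2
        = ‖x - y‖ ^ 2 - 2 * l * (inner ℝ (x - y) (f x - f y) : ℝ) + l ^ 2 * ‖f x - f y‖ ^ 2 := by
      rw [hgd, norm_sub_sq_real, real_inner_smul_right, norm_smul, Real.norm_eq_abs,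
        abs_of_pos hl0, mul_pow]
      ring
    have h1 : ‖f x - f y‖ ^ 2 ≤ ‖x - y‖ ^ 2 := by
      nlinarith [norm_nonneg (f x - f y)]
    have h2 : 2 * l * (l * ‖x - y‖ ^ 2) ≤ 2 * l * (inner ℝ (x - y) (f x - f y) : ℝ) :=
      mul_le_mul_of_nonneg_left hhh (by positivity)
    have h3 : l ^ 2 * ‖f x - f y‖ ^ 2 ≤ l ^ 2 * ‖x - y‖ ^ 2 :=
      mul_le_mul_of_nonneg_left h1 (by positivity)
    nlinarith
  set K : NNReal := Real.toNNReal (Real.sqrt (1 - l ^ 2)) with hK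
  have hKlt : K < 1 := by
    have h1 : Real.sqrt (1 - l ^ 2) < 1 := (Real.sqrt_lt' one_pos).2 (by nlinarith)
    exact_mod_cast Real.toNNReal_lt_one.2 h1
  have hlip : LipschitzWith K g := by
    apply LipschitzWith.of_dist_le_mul
    intro x y
    rw [dist_eq_norm, dist_eq_norm]
    rcases le_or_gt (1 - l ^ 2) 0 with h | h
    · have h5 := hsq x y
      have hz : ‖g x - g y‖ ^ 2 ≤ 0 := le_trans h5 (by nlinarith [sq_nonneg ‖x - y‖])
      have h6 : ‖g x - g y‖ = 0 := by nlinarith [norm_nonneg (g x - g y)]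
      rw [h6]; positivity
    · have hsqrt : (K : ℝ) = Real.sqrt (1 - l ^ 2) := by
        rw [hK, Real.coe_toNNReal _ (Real.sqrt_nonneg _)]
      rw [hsqrt]
      have h2 : (Real.sqrt (1 - l ^ 2) * ‖x - y‖) ^ 2 = (1 - l ^ 2) * ‖x - y‖ ^ 2 := by
        rw [mul_pow, Real.sq_sqrt (le_of_lt h)]
      nlinarith [hsq x y, norm_nonneg (g x - g y), norm_nonneg (x - y),
        Real.sqrt_nonneg (1 - l ^ 2),
        mul_nonneg (Real.sqrt_nonneg (1 - l ^ 2)) (norm_nonneg (x - y))]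
  have hc : ContractingWith K g := ⟨hKlt, hlip⟩
  obtain ⟨x, hx, -⟩ := hc.exists_fixedPoint (0 : X) (edist_ne_top _ _)
  refine ⟨x, ?_⟩
  have h6 : x - l • (f x - z) = x := hx
  have h7 : l • (f x - z) = 0 := sub_eq_self.1 h6
  rcases smul_eq_zero.1 h7 with h | h
  · exact absurd h (ne_of_gt hl0)
  · exact sub_eq_zero.1 h

/-- Convex combinations of two points in the range of a firmly nonexpansive map
lie in the closure of the range. -/
lemma aux_fne_combo_mem {U : X → X}
    (hU : ∀ x y : X, ‖U x - U y‖ ^ 2 ≤ (inner ℝ (x - y) (U x - U y) : ℝ))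
    (w₁ w₂ : X) {t : ℝ} (ht0 : 0 ≤ t) (ht1 : t ≤ 1) :
    (1 - t) • U w₁ + t • U w₂ ∈ closure (Set.range U) := by
  set u₁ := U w₁
  set u₂ := U w₂
  set m := (1 - t) • u₁ + t • u₂ with hm
  set a₁ := w₁ - u₁
  set a₂ := w₂ - u₂
  set B₁ := ‖m - u₁‖ + ‖a₁‖ with hB₁
  set B₂ := ‖m - u₂‖ + ‖a₂‖ with hB₂
  set C := ‖a₁‖ * B₁ + ‖a₂‖ * B₂ with hC
  have hB₁0 : 0 ≤ B₁ := by positivity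
  have hB₂0 : 0 ≤ B₂ := by positivity
  have hC0 : 0 ≤ C := by positivity
  rw [Metric.mem_closure_iff]
  intro ε hε
  set l := min 1 (ε ^ 2 / (2 * (C + 1))) with hl
  have hl0 : 0 < l := lt_min one_pos (by positivity)
  have hl1 : l ≤ 1 := min_le_left _ _
  have hlC : l * C < ε ^ 2 := by
    have h1 : l ≤ ε ^ 2 / (2 * (C + 1)) := min_le_right _ _
    have h2 : l * C ≤ ε ^ 2 / (2 * (C + 1)) * C :=
      mul_le_mul_of_nonneg_right h1 hC0
    have h3 : ε ^ 2 / (2 * (C + 1)) * C < ε ^ 2 := by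
      rw [div_mul_eq_mul_div, div_lt_iff₀ (by positivity)]
      nlinarith
    exact lt_of_le_of_lt h2 h3
  obtain ⟨x, hx⟩ := aux_fne_surj hU hl0 hl1 m
  set p := U x with hp
  refine ⟨p, Set.mem_range_self x, ?_⟩
  rw [dist_eq_norm]
  have hmp : m - p = l • (x - p) := by
    rw [← hx, smul_sub]
    have h8 : (1 - l) • p = p - l • p := by rw [sub_smul, one_smul]
    rw [h8]; abel
  have key : ∀ w : X, ‖p - U w‖ ^ 2 ≤ (inner ℝ (m - U w - l • (w - U w)) (p - U w) : ℝ) := by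
    intro w
    have h1 : ‖p - U w‖ ^ 2 ≤ (inner ℝ (x - w) (p - U w) : ℝ) := hU x w
    have h2 : (0:ℝ) ≤ inner ℝ ((x - p) - (w - U w)) (p - U w) := by
      have e : (x - p) - (w - U w) = (x - w) - (p - U w) := by abel
      rw [e, inner_sub_left, real_inner_self_eq_norm_sq]
      linarith
    have e2 : m - U w - l • (w - U w) = l • ((x - p) - (w - U w)) + (p - U w) := by
      have e3 : m - U w - l • (w - U w) = (m - p) + (p - U w) - l • (w - U w) := by abel
      rw [e3, hmp, smul_sub l (x - p) (w - U w)]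
      abel
    rw [e2, inner_add_left, real_inner_self_eq_norm_sq, real_inner_smul_left]
    nlinarith
  have bnd : ∀ w : X, ‖p - U w‖ ≤ ‖m - U w‖ + ‖w - U w‖ := by
    intro w
    have h1 := key w
    have hcs := real_inner_le_norm (m - U w - l • (w - U w)) (p - U w)
    have hv : ‖m - U w - l • (w - U w)‖ ≤ ‖m - U w‖ + ‖w - U w‖ := by
      calc ‖m - U w - l • (w - U w)‖ ≤ ‖m - U w‖ + ‖l • (w - U w)‖ := norm_sub_le _ _
        _ = ‖m - U w‖ + l * ‖w - U w‖ := by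
            rw [norm_smul, Real.norm_eq_abs, abs_of_pos hl0]
        _ ≤ ‖m - U w‖ + ‖w - U w‖ := by nlinarith [norm_nonneg (w - U w)]
    rcases eq_or_lt_of_le (norm_nonneg (p - U w)) with h0 | h0
    · rw [← h0]; positivity
    · nlinarith [norm_nonneg (m - U w), norm_nonneg (w - U w)]
  have Q₁ : ‖p - u₁‖ ^ 2 ≤ (inner ℝ (m - u₁) (p - u₁) : ℝ) + l * (‖a₁‖ * B₁) := by
    have h1 := key w₁
    have h2 : (inner ℝ (m - u₁ - l • a₁) (p - u₁) : ℝ)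
        = (inner ℝ (m - u₁) (p - u₁) : ℝ) - l * (inner ℝ a₁ (p - u₁) : ℝ) := by
      rw [inner_sub_left, real_inner_smul_left]
    have h3 : -(inner ℝ a₁ (p - u₁) : ℝ) ≤ ‖a₁‖ * B₁ := by
      have hb := bnd w₁
      have h4 : -(inner ℝ a₁ (p - u₁) : ℝ) ≤ ‖a₁‖ * ‖p - u₁‖ := by
        cases' abs_le.1 (abs_real_inner_le_norm a₁ (p - u₁)) with hL hR
        linarith
      nlinarith [norm_nonneg a₁]
    nlinarith [mul_le_mul_of_nonneg_left h3 (le_of_lt hl0)]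
  have Q₂ : ‖p - u₂‖ ^ 2 ≤ (inner ℝ (m - u₂) (p - u₂) : ℝ) + l * (‖a₂‖ * B₂) := by
    have h1 := key w₂
    have h2 : (inner ℝ (m - u₂ - l • a₂) (p - u₂) : ℝ)
        = (inner ℝ (m - u₂) (p - u₂) : ℝ) - l * (inner ℝ a₂ (p - u₂) : ℝ) := by
      rw [inner_sub_left, real_inner_smul_left]
    have h3 : -(inner ℝ a₂ (p - u₂) : ℝ) ≤ ‖a₂‖ * B₂ := by
      have hb := bnd w₂
      have h4 : -(inner ℝ a₂ (p - u₂) : ℝ) ≤ ‖a₂‖ * ‖p - u₂‖ := by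
        cases' abs_le.1 (abs_real_inner_le_norm a₂ (p - u₂)) with hL hR
        linarith
      nlinarith [norm_nonneg a₂]
    nlinarith [mul_le_mul_of_nonneg_left h3 (le_of_lt hl0)]
  have hident := aux_combo_ident u₁ u₂ p t
  rw [← hm] at hident
  have hQ : ‖p - m‖ ^ 2 ≤ l * C := by
    have hQ₁ := mul_le_mul_of_nonneg_left Q₁ (by linarith : (0:ℝ) ≤ 1 - t)
    have hQ₂ := mul_le_mul_of_nonneg_left Q₂ ht0
    have e1 : (1 - t) * (l * (‖a₁‖ * B₁)) ≤ l * (‖a₁‖ * B₁) := by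
      nlinarith [mul_nonneg ht0 (mul_nonneg hl0.le (mul_nonneg (norm_nonneg a₁) hB₁0))]
    have e2 : t * (l * (‖a₂‖ * B₂)) ≤ l * (‖a₂‖ * B₂) := by
      nlinarith [mul_nonneg (by linarith : (0:ℝ) ≤ 1 - t)
        (mul_nonneg hl0.le (mul_nonneg (norm_nonneg a₂) hB₂0))]
    rw [hC]
    nlinarith
  have h9 : ‖p - m‖ ^ 2 < ε ^ 2 := lt_of_le_of_lt hQ hlC
  have h10 := lt_of_pow_lt_pow_left₀ 2 (le_of_lt hε) h9
  rw [norm_sub_rev] at h10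
  exact h10

/-- The closure of the range of a firmly nonexpansive map with full domain is convex. -/
lemma aux_fne_closure_convex {U : X → X}
    (hU : ∀ x y : X, ‖U x - U y‖ ^ 2 ≤ (inner ℝ (x - y) (U x - U y) : ℝ)) :
    Convex ℝ (closure (Set.range U)) := by
  intro p hp q hq a b ha hb hab
  set S := Set.range U with hS
  have habs : a • p + b • q = (1 - b) • p + b • q := by rw [show 1 - b = a by linarith]
  rw [habs]
  have cont : Continuous (fun pq : X × X => (1 - b) • pq.1 + b • pq.2) := by fun_prop
  have h1 : (p, q) ∈ closure (S ×ˢ S) := by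
    rw [closure_prod_eq]; exact ⟨hp, hq⟩
  have h3 : (1 - b) • p + b • q
      ∈ closure ((fun pq : X × X => (1 - b) • pq.1 + b • pq.2) '' (S ×ˢ S)) :=
    image_closure_subset_closure_image cont (Set.mem_image_of_mem _ h1)
  have h4 : (fun pq : X × X => (1 - b) • pq.1 + b • pq.2) '' (S ×ˢ S) ⊆ closure S := by
    rintro - ⟨⟨y₁, y₂⟩, ⟨⟨w₁, rfl⟩, ⟨w₂, rfl⟩⟩, rfl⟩
    exact aux_fne_combo_mem hU w₁ w₂ hb (by linarith)
  have h5 := closure_mono h4 h3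
  rwa [closure_closure] at h5

/-- The horizon cone is contained in the recession cone of the closure,
provided the latter is convex. -/
lemma aux_horizon_sub_rec {S : Set X} (hconv : Convex ℝ (closure S)) :
    horizonCone S ⊆ recCone (closure S) := by
  rintro x ⟨s, l, hs, hl0, hl, hx⟩ c hc
  have hev : ∀ᶠ n in atTop, l n < 1 := hl.eventually_lt_const one_pos
  have hmem : ∀ᶠ n in atTop, l n • s n + (1 - l n) • c ∈ closure S := by
    filter_upwards [hev] with n hn
    exact hconv (subset_closure (hs n)) hc (le_of_lt (hl0 n)) (by linarith) (by ring)
  have htend : Tendsto (fun n => l n • s n + (1 - l n) • c) atTop (nhds (x + c)) := by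
    have h1 : Tendsto (fun n => (1 - l n) • c) atTop (nhds (((1:ℝ) - 0) • c)) :=
      ((tendsto_const_nhds.sub hl).smul tendsto_const_nhds)
    simpa using hx.add h1
  exact isClosed_closure.mem_of_tendsto htend hmem

/-- The recession cone of the closure is contained in the horizon cone. -/
lemma aux_rec_sub_horizon {S : Set X} (hne : S.Nonempty) :
    recCone (closure S) ⊆ horizonCone S := by
  rintro x hx
  obtain ⟨s₀, hs₀⟩ := hne
  have hmem : ∀ n : ℕ, ((n : ℝ) + 1) • x + s₀ ∈ closure S := by
    intro n
    induction n with
    | zero => simpa using hx s₀ (subset_closure hs₀)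
    | succ n ih =>
        have h2 := hx _ ih
        have e : (((n + 1 : ℕ) : ℝ) + 1) • x + s₀ = x + (((n : ℝ) + 1) • x + s₀) := by
          push_cast
          rw [show ((n : ℝ) + 1 + 1) = ((n : ℝ) + 1) + 1 by ring, add_smul, one_smul]
          abel
        rw [e]; exact h2
  have hchoice : ∀ n : ℕ, ∃ p ∈ S, dist (((n : ℝ) + 1) • x + s₀) p < 1 :=
    fun n => Metric.mem_closure_iff.1 (hmem n) 1 one_pos
  choose s hsS hsd using hchoice
  refine ⟨s, fun n => 1 / ((n : ℝ) + 1), hsS, fun n => by positivity,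
    tendsto_one_div_add_atTop_nhds_zero_nat, ?_⟩
  have hdecomp : ∀ n : ℕ, (1 / ((n : ℝ) + 1)) • s n
      = (1 / ((n : ℝ) + 1)) • (s n - (((n : ℝ) + 1) • x + s₀)) + x
        + (1 / ((n : ℝ) + 1)) • s₀ := by
    intro n
    have hne0 : ((n : ℝ) + 1) ≠ 0 := by positivity
    rw [smul_sub, smul_add, smul_smul, one_div_mul_cancel hne0, one_smul]
    abel
  rw [show (nhds x) = nhds ((0 : X) + x + 0) by simp]
  simp only [hdecomp]
  refine Tendsto.add (Tendsto.add ?_ tendsto_const_nhds) ?_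
  · have hb : ∀ n : ℕ, ‖(1 / ((n : ℝ) + 1)) • (s n - (((n : ℝ) + 1) • x + s₀))‖
        ≤ 1 / ((n : ℝ) + 1) := by
      intro n
      rw [norm_smul, Real.norm_eq_abs, abs_of_pos (by positivity)]
      have hd := hsd n
      rw [dist_eq_norm, norm_sub_rev] at hd
      have h1 : (0:ℝ) < 1 / ((n : ℝ) + 1) := by positivity
      nlinarith [norm_nonneg (s n - (((n : ℝ) + 1) • x + s₀))]
    exact squeeze_zero_norm hb tendsto_one_div_add_atTop_nhds_zero_nat
  · simpa using (tendsto_one_div_add_atTop_nhds_zero_nat (𝕜 := ℝ)).smul_const s₀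

/-- If `T` is firmly nonexpansive and fixed-point free, then
`(ran T)^∞ ∩ (ran (T − Id))^∞ = rec (closure (ran T)) ∩ rec (closure (ran (T − Id)))`. -/
theorem stmt16 (T : X → X)
    (hT : ∀ x y : X, ‖T x - T y‖ ^ 2 ≤ (inner ℝ (x - y) (T x - T y) : ℝ))
    (hfix : ∀ x : X, T x ≠ x) :
    horizonCone (Set.range T) ∩ horizonCone (Set.range fun z : X => T z - z)
      = recCone (closure (Set.range T)) ∩
        recCone (closure (Set.range fun z : X => T z - z)) := by
  haveI : Nonempty X := ⟨0⟩
  -- `Id - T` is also firmly nonexpansive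
  have hU : ∀ x y : X, ‖(x - T x) - (y - T y)‖ ^ 2
      ≤ (inner ℝ (x - y) ((x - T x) - (y - T y)) : ℝ) := by
    intro x y
    have h := hT x y
    have e1 : (x - T x) - (y - T y) = (x - y) - (T x - T y) := by abel
    have e2 : (inner ℝ (x - y) ((x - y) - (T x - T y)) : ℝ)
        = ‖x - y‖ ^ 2 - (inner ℝ (x - y) (T x - T y) : ℝ) := by
      rw [inner_sub_right, real_inner_self_eq_norm_sq]
    have e3 : ‖(x - y) - (T x - T y)‖ ^ 2
        = ‖x - y‖ ^ 2 - 2 * (inner ℝ (x - y) (T x - T y) : ℝ) + ‖T x - T y‖ ^ 2 :=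
      norm_sub_sq_real _ _
    rw [e1, e3, e2]
    linarith
  -- convexity of the closures of the two ranges
  have hc1 : Convex ℝ (closure (Set.range T)) := aux_fne_closure_convex hT
  have hrange : (Set.range fun z : X => T z - z) = -(Set.range fun z : X => z - T z) := by
    ext y
    simp only [Set.mem_neg, Set.mem_range]
    constructor
    · rintro ⟨z, rfl⟩; exact ⟨z, by abel⟩
    · rintro ⟨z, hz⟩
      exact ⟨z, by rw [show T z - z = -(z - T z) by abel, hz, neg_neg]⟩
  have hc2 : Convex ℝ (closure (Set.range fun z : X => T z - z)) := by
    have hcl : closure (-(Set.range fun z : X => z - T z))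
        = -closure (Set.range fun z : X => z - T z) := by
      have h1 := (Homeomorph.neg X).image_closure (Set.range fun z : X => z - T z)
      simp only [Homeomorph.neg, Homeomorph.homeomorph_mk_coe, Equiv.neg_apply] at h1
      rw [Set.image_neg_eq_neg, Set.image_neg_eq_neg] at h1
      exact h1.symm
    rw [hrange, hcl]
    exact (aux_fne_closure_convex hU).neg
  have hne1 : (Set.range T).Nonempty := Set.range_nonempty T
  have hne2 : (Set.range fun z : X => T z - z).Nonempty := Set.range_nonempty _
  have e1 : horizonCone (Set.range T) = recCone (closure (Set.range T)) :=
    subset_antisymm (aux_horizon_sub_rec hc1) (aux_rec_sub_horizon hne1)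
  have e2 : horizonCone (Set.range fun z : X => T z - z)
      = recCone (closure (Set.range fun z : X => T z - z)) :=
    subset_antisymm (aux_horizon_sub_rec hc2) (aux_rec_sub_horizon hne2)
  rw [e1, e2]
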